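/- Let h : ℝ → ℝ be differentiable and let a, k ∈ ℝ. Suppose u : ℝ → ℝ → ℝ is C² on ℝ × (0,∞) and satisfies u_t(t,r) = h'(u_r(t,r))·u_rr(t,r) − (1/r)·h(u_r(t,r)) + a + k·u(t,r) for all t ∈ ℝ and r > 0 (the case m = −1). Define T(t,r) = r⁻¹·exp(−k·t)·u(t,r) and X(t,r) = −exp(−k·t)·(r⁻¹·h(u_r(t,r)) + a·Real.log r). Then ∂T/∂t(t,r) + ∂X/∂r(t,r) = 0 for all t ∈ ℝ and r > 0. -/

import Mathlib

noncomputable section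

/-- Partial derivative in the first (time) variable. -/
def partial_t (u : ℝ → ℝ → ℝ) (t r : ℝ) : ℝ := deriv (fun s => u s r) t

/-- Partial derivative in the second (space) variable. -/
def partial_r (u : ℝ → ℝ → ℝ) (t r : ℝ) : ℝ := deriv (fun s => u t s) r

/-- Second partial derivative in the second (space) variable. -/
def partial_rr (u : ℝ → ℝ → ℝ) (t r : ℝ) : ℝ := deriv (deriv (fun s => u t s)) r

/-- Mixed partial derivative: first in space, then in time. -/
def partial_tr (u : ℝ → ℝ → ℝ) (t r : ℝ) : ℝ := deriv (fun s => deriv (fun y => u s y) r) t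

/-- `u` is C² on ℝ × (0,∞): `u`, `u_t`, `u_r`, `u_rr` and the mixed partial `u_tr`
exist and are continuous there. -/
def IsC2On (u : ℝ → ℝ → ℝ) : Prop :=
  (∀ t r : ℝ, 0 < r → DifferentiableAt ℝ (fun s => u s r) t) ∧
  (∀ t r : ℝ, 0 < r → DifferentiableAt ℝ (fun s => u t s) r) ∧
  (∀ t r : ℝ, 0 < r → DifferentiableAt ℝ (deriv (fun s => u t s)) r) ∧
  (∀ t r : ℝ, 0 < r → DifferentiableAt ℝ (fun s => deriv (fun y => u s y) r) t) ∧
  ContinuousOn (fun q : ℝ × ℝ => u q.1 q.2) {q : ℝ × ℝ | 0 < q.2} ∧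
  ContinuousOn (fun q : ℝ × ℝ => partial_t u q.1 q.2) {q : ℝ × ℝ | 0 < q.2} ∧
  ContinuousOn (fun q : ℝ × ℝ => partial_r u q.1 q.2) {q : ℝ × ℝ | 0 < q.2} ∧
  ContinuousOn (fun q : ℝ × ℝ => partial_rr u q.1 q.2) {q : ℝ × ℝ | 0 < q.2} ∧
  ContinuousOn (fun q : ℝ × ℝ => partial_tr u q.1 q.2) {q : ℝ × ℝ | 0 < q.2}

/-- Conservation law with multiplier `r⁻¹ exp(-kt)` for the 1-dimensional nonlinear
diffusion-reaction equation with source `f(u) = a + k·u`, case `m = -1`. -/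
theorem conservation_law_linear_source_m_eq_neg_one (h : ℝ → ℝ) (hh : Differentiable ℝ h)
    (a k : ℝ)
    (u : ℝ → ℝ → ℝ) (hu : IsC2On u)
    (hpde : ∀ t r : ℝ, 0 < r →
      partial_t u t r = deriv h (partial_r u t r) * partial_rr u t r
        - (1 / r) * h (partial_r u t r) + a + k * u t r)
    (T X : ℝ → ℝ → ℝ)
    (hT : ∀ t r : ℝ, T t r = r⁻¹ * Real.exp (-k * t) * u t r)
    (hX : ∀ t r : ℝ, X t r
      = -(Real.exp (-k * t) * (r⁻¹ * h (partial_r u t r) + a * Real.log r))) :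
    ∀ t r : ℝ, 0 < r → partial_t T t r + partial_r X t r = 0 := by
 
  obtain ⟨h1, h2, h3, h4, -⟩ := hu
  intro t r hr
  have hrne : r ≠ 0 := ne_of_gt hr
  have hTt : partial_t T t r
      = r⁻¹ * (Real.exp (-k * t) * (-k) * u t r
        + Real.exp (-k * t) * partial_t u t r) := by
    have heq : (fun s => T s r) = fun s => r⁻¹ * (Real.exp (-k * s) * u s r) := by
      funext s; rw [hT]; ring
    have he : HasDerivAt (fun s => Real.exp (-k * s)) (Real.exp (-k * t) * (-k)) t := by
      have h1 : HasDerivAt (fun s : ℝ => -k * s) (-k) t := by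
        simpa using (hasDerivAt_id t).const_mul (-k)
      exact (Real.hasDerivAt_exp (-k * t)).comp t h1
    have hut : HasDerivAt (fun s => u s r) (partial_t u t r) t := (h1 t r hr).hasDerivAt
    have := ((he.mul hut).const_mul r⁻¹)
    rw [partial_t, heq]; exact this.deriv
  have hXr : partial_r X t r
      = -(Real.exp (-k * t) * (-(r⁻¹ * r⁻¹) * h (partial_r u t r)
          + r⁻¹ * (deriv h (partial_r u t r) * partial_rr u t r) + a * r⁻¹)) := by
    have heq : (fun s => X t s)
        = fun s => -(Real.exp (-k * t) * (s⁻¹ * h (deriv (fun y => u t y) s)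
            + a * Real.log s)) := by
      funext s; rw [hX]; rfl
    have hinv : HasDerivAt (fun s : ℝ => s⁻¹) (-(r⁻¹ * r⁻¹)) r := by
      have := hasDerivAt_inv hrne
      simpa [pow_two, mul_inv] using this
    have hur : HasDerivAt (fun s => deriv (fun y => u t y) s) (partial_rr u t r) r :=
      (h3 t r hr).hasDerivAt
    have hhd : HasDerivAt h (deriv h (partial_r u t r)) (partial_r u t r) :=
      (hh (partial_r u t r)).hasDerivAt
    have hcomp : HasDerivAt (fun s => h (deriv (fun y => u t y) s))
        (deriv h (partial_r u t r) * partial_rr u t r) r :=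
      HasDerivAt.comp r hhd hur
    have hlog : HasDerivAt (fun s : ℝ => a * Real.log s) (a * r⁻¹) r :=
      (Real.hasDerivAt_log hrne).const_mul a
    have hmain := ((((hinv.mul hcomp).add hlog).const_mul (Real.exp (-k * t))).neg)
    rw [partial_r, heq]; exact hmain.deriv
  rw [hTt, hXr, hpde t r hr]
  field_simp
  ring
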